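/- Let D be a canonical DBM over n clocks with D i i = 0 for all i and ⟦D⟧ ≠ ∅, and let S ⊆ Fin (n+1) with 0 ∉ S. Then the zone of the reset matrix D[S := 0] is exactly the image of the zone of D under resetting the clocks in S to zero: ⟦D[S := 0]⟧ = {v[S := 0] | v ∈ ⟦D⟧}. -/

import Mathlib

open scoped Classical

/-- A DBM over `n` clocks: index `0` is the reference clock. -/
abbrev DBM (n : ℕ) := Fin (n + 1) → Fin (n + 1) → WithTop ℝ

/-- The zone of a DBM. -/
def Zone {n : ℕ} (D : DBM n) : Set (Fin (n + 1) → ℝ) :=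
  {v | v 0 = 0 ∧ ∀ i j, ((v i - v j : ℝ) : WithTop ℝ) ≤ D i j}

/-- A DBM is canonical if it satisfies the triangle inequality. -/
def Canonical {n : ℕ} (D : DBM n) : Prop :=
  ∀ i j k, D i j ≤ D i k + D k j

/-- The reset matrix `D[S := 0]`. -/
noncomputable def resetDBM {n : ℕ} (D : DBM n) (S : Set (Fin (n + 1))) : DBM n := fun j k =>
  if j ∈ S then (if k ∈ S then 0 else D 0 k)
  else (if k ∈ S then D j 0 else D j k)

/-- The valuation `v[S := 0]`: zero on coordinates in `S`, `v` elsewhere. -/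
noncomputable def resetVal {n : ℕ} (S : Set (Fin (n + 1))) (v : Fin (n + 1) → ℝ) :
    Fin (n + 1) → ℝ := fun i => if i ∈ S then 0 else v i

lemma coe_sub_le_iff {a b : ℝ} {c : WithTop ℝ} :
    ((a - b : ℝ) : WithTop ℝ) ≤ c ↔ (a : WithTop ℝ) ≤ ((b : ℝ) : WithTop ℝ) + c := by
  induction c using WithTop.recTopCoe with
  | top => simp
  | coe c =>
    rw [← WithTop.coe_add, WithTop.coe_le_coe, WithTop.coe_le_coe]
    exact sub_le_iff_le_add'

noncomputable def infRow {n : ℕ} (D : DBM n) (t : Fin (n + 1) → ℝ) (i : Fin (n + 1)) :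
    WithTop ℝ :=
  Finset.univ.inf' Finset.univ_nonempty (fun j => ((t j : ℝ) : WithTop ℝ) + D i j)

lemma infRow_le {n : ℕ} (D : DBM n) (t : Fin (n + 1) → ℝ) (i j : Fin (n + 1)) :
    infRow D t i ≤ ((t j : ℝ) : WithTop ℝ) + D i j :=
  Finset.inf'_le _ (Finset.mem_univ j)

lemma infRow_ne_top {n : ℕ} (D : DBM n) (hdiag : ∀ i, D i i = 0) (t : Fin (n + 1) → ℝ)
    (i : Fin (n + 1)) : infRow D t i ≠ ⊤ := by
  intro h
  have h2 := infRow_le D t i i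
  rw [h, hdiag i, add_zero, top_le_iff] at h2
  exact WithTop.coe_ne_top h2

lemma infRow_exists {n : ℕ} (D : DBM n) (t : Fin (n + 1) → ℝ) (i : Fin (n + 1)) :
    ∃ k, infRow D t i = ((t k : ℝ) : WithTop ℝ) + D i k := by
  obtain ⟨k, -, hk⟩ := Finset.exists_mem_eq_inf' (Finset.univ_nonempty)
    (fun j => ((t j : ℝ) : WithTop ℝ) + D i j)
  exact ⟨k, hk⟩

lemma infRow_tri {n : ℕ} (D : DBM n) (hD : Canonical D) (t : Fin (n + 1) → ℝ)
    (i k : Fin (n + 1)) : infRow D t i ≤ D i k + infRow D t k := by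
  obtain ⟨j, hj⟩ := infRow_exists D t k
  rw [hj]
  calc infRow D t i ≤ ((t j : ℝ) : WithTop ℝ) + D i j := infRow_le D t i j
    _ ≤ ((t j : ℝ) : WithTop ℝ) + (D i k + D k j) := add_le_add_right (hD i j k) _
    _ = D i k + (((t j : ℝ) : WithTop ℝ) + D k j) := by
        rw [add_left_comm]

/-- Key extension lemma: if `t` satisfies the constraints of `D` "from outside `S`",
then it can be modified on `S` to satisfy all constraints of `D`. -/
lemma exists_extension {n : ℕ} (D : DBM n) (hD : Canonical D) (hdiag : ∀ i, D i i = 0)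
    (S : Set (Fin (n + 1))) (t : Fin (n + 1) → ℝ)
    (ht : ∀ j, j ∉ S → ∀ k, (t j : WithTop ℝ) ≤ ((t k : ℝ) : WithTop ℝ) + D j k) :
    ∃ v : Fin (n + 1) → ℝ, (∀ i, i ∉ S → v i = t i) ∧
      ∀ i j, ((v i - v j : ℝ) : WithTop ℝ) ≤ D i j := by
  set v : Fin (n + 1) → ℝ :=
    fun i => if i ∈ S then (infRow D t i).untop (infRow_ne_top D hdiag t i) else t i with hv
  have hco : ∀ i ∈ S, ((v i : ℝ) : WithTop ℝ) = infRow D t i := by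
    intro i hi
    rw [hv]
    simp only [hi, if_true]
    exact WithTop.coe_untop _ _
  have hvn : ∀ i, i ∉ S → v i = t i := by
    intro i hi; rw [hv]; simp [hi]
  refine ⟨v, hvn, ?_⟩
  have key : ∀ i j, ((v i : ℝ) : WithTop ℝ) ≤ ((v j : ℝ) : WithTop ℝ) + D i j := by
    intro i j
    by_cases hi : i ∈ S <;> by_cases hj : j ∈ S
    · rw [hco i hi, hco j hj]
      calc infRow D t i ≤ D i j + infRow D t j := infRow_tri D hD t i j
        _ = infRow D t j + D i j := add_comm _ _
    · rw [hco i hi, hvn j hj]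
      exact infRow_le D t i j
    · rw [hvn i hi, hco j hj]
      obtain ⟨k, hk⟩ := infRow_exists D t j
      rw [hk]
      calc ((t i : ℝ) : WithTop ℝ) ≤ ((t k : ℝ) : WithTop ℝ) + D i k := ht i hi k
        _ ≤ ((t k : ℝ) : WithTop ℝ) + (D i j + D j k) := add_le_add_right (hD i k j) _
        _ = (((t k : ℝ) : WithTop ℝ) + D j k) + D i j := by
            rw [add_left_comm, add_comm]
    · rw [hvn i hi, hvn j hj]
      exact ht i hi j
  intro i j
  exact coe_sub_le_iff.mpr (key i j)

/-- for a canonical, consistent DBM with zero diagonal, the zone of the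
reset matrix `D[S := 0]` is exactly the image of the zone of `D` under resetting the
clocks in `S` to zero. -/
theorem zone_reset_eq_image {n : ℕ} (D : DBM n) (hD : Canonical D)
    (hdiag : ∀ i, D i i = 0) (hne : Zone D ≠ ∅)
    (S : Set (Fin (n + 1))) (h0 : (0 : Fin (n + 1)) ∉ S) :
    Zone (resetDBM D S) = (resetVal S) '' (Zone D) := by
  ext u
  simp only [Set.mem_image]
  constructor
  · rintro ⟨hu0, hu⟩
    obtain ⟨w, hw0, hw⟩ : (Zone D).Nonempty := Set.nonempty_iff_ne_empty.mpr hne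
    -- clocks in S are zero under u
    have huS : ∀ i ∈ S, u i = 0 := by
      intro i hi
      have h1 := hu i 0
      have h2 := hu 0 i
      simp only [resetDBM, hi, h0, if_true, if_false, if_neg h0] at h1 h2
      rw [hdiag 0] at h1 h2
      rw [hu0] at h1 h2
      have h1' : u i - 0 ≤ 0 := by exact_mod_cast h1
      have h2' : (0 : ℝ) - u i ≤ 0 := by exact_mod_cast h2
      linarith
    set M : ℝ := Finset.univ.sup' Finset.univ_nonempty (fun j => u j - w j) with hM
    set t : Fin (n + 1) → ℝ := fun j => if j ∈ S then w j + M else u j with htdef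
    have ht : ∀ j, j ∉ S → ∀ k, (t j : WithTop ℝ) ≤ ((t k : ℝ) : WithTop ℝ) + D j k := by
      intro j hj k
      have hj' : t j = u j := by simp [htdef, hj]
      by_cases hk : k ∈ S
      · have h1 : u j - w j ≤ M := by
          rw [hM]; exact Finset.le_sup' (fun j => u j - w j) (Finset.mem_univ j)
        have h2' : ((w j : ℝ) : WithTop ℝ) ≤ ((w k : ℝ) : WithTop ℝ) + D j k :=
          coe_sub_le_iff.mp (hw j k)
        have hk' : t k = w k + M := by simp [htdef, hk]
        rw [hj', hk']
        calc ((u j : ℝ) : WithTop ℝ) ≤ ((M + w j : ℝ) : WithTop ℝ) :=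
              WithTop.coe_le_coe.mpr (by linarith)
          _ = ((M : ℝ) : WithTop ℝ) + ((w j : ℝ) : WithTop ℝ) := WithTop.coe_add M (w j)
          _ ≤ ((M : ℝ) : WithTop ℝ) + (((w k : ℝ) : WithTop ℝ) + D j k) :=
              add_le_add_right h2' _
          _ = (((M : ℝ) : WithTop ℝ) + ((w k : ℝ) : WithTop ℝ)) + D j k := (add_assoc _ _ _).symm
          _ = ((w k + M : ℝ) : WithTop ℝ) + D j k := by
              rw [← WithTop.coe_add, add_comm M (w k)]
      · have hk' : t k = u k := by simp [htdef, hk]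
        rw [hj', hk']
        have h3 := hu j k
        simp only [resetDBM, if_neg hj, if_neg hk] at h3
        exact coe_sub_le_iff.mp h3
    obtain ⟨v, hv1, hv2⟩ := exists_extension D hD hdiag S t ht
    have hv0 : v 0 = 0 := by
      rw [hv1 0 h0]; simp [htdef, h0, hu0]
    refine ⟨v, ⟨hv0, hv2⟩, ?_⟩
    funext i
    by_cases hi : i ∈ S
    · simp [resetVal, hi, huS i hi]
    · simp [resetVal, hi, hv1 i hi, htdef]
  · rintro ⟨v, ⟨hv0, hv⟩, rfl⟩
    refine ⟨by simp [resetVal, h0, hv0], ?_⟩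
    intro i j
    by_cases hi : i ∈ S <;> by_cases hj : j ∈ S
    · simp [resetVal, resetDBM, hi, hj]
    · have h3 := hv 0 j
      rw [hv0] at h3
      simpa [resetVal, resetDBM, hi, hj] using h3
    · have h3 := hv i 0
      rw [hv0] at h3
      simpa [resetVal, resetDBM, hi, hj] using h3
    · simpa [resetVal, resetDBM, hi, hj] using hv i j
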